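/- arXiv:1403.4144 — 6 statements merged into one kernel-verified Lean document; each statement's English description precedes it below -/
import Mathlib

section
/- For the dual LP with multi-cluster cardinality-based rates where, within each cluster, the demands d_i are sorted in descending order, there exists an optimal solution π* such that within each cluster the values π*_i are also in descending order (i.e., d_i ≥ d_l implies π*_i ≥ π*_l for i, l in the same cluster). -/
open Finset

section aux

variable {N K : ℕ}

/-- swapping two indices with equal `f`-value preserves `f`. -/
lemma aux_swap_pres {α : Type*} (f : Fin N → α) {i l : Fin N} (hf : f i = f l) (j : Fin N) :
    f (Equiv.swap i l j) = f j := by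
  rcases eq_or_ne j i with rfl | hji
  · rw [Equiv.swap_apply_left, hf]
  rcases eq_or_ne j l with rfl | hjl
  · rw [Equiv.swap_apply_right, hf]
  · rw [Equiv.swap_apply_of_ne_of_ne hji hjl]

/-- composing a feasible point with a cluster-preserving permutation stays feasible. -/
lemma aux_feas_comp (cluster : Fin N → Fin K) (ρ : Fin K → (Fin K → ℕ) → ℝ) (π : Fin N → ℝ)
    (h1 : ∀ i, 0 ≤ π i)
    (h2 : ∀ c : Finset (Fin N), c.Nonempty →
      ∑ i ∈ c, ρ (cluster i) (fun j => (c.filter (fun i' => cluster i' = j)).card) * π i ≤ 1)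
    (τ : Equiv.Perm (Fin N)) (hτ : ∀ i, cluster (τ i) = cluster i) :
    (∀ i, 0 ≤ π (τ i)) ∧
    ∀ c : Finset (Fin N), c.Nonempty →
      ∑ i ∈ c, ρ (cluster i) (fun j => (c.filter (fun i' => cluster i' = j)).card) * π (τ i) ≤ 1 := by
  refine ⟨fun i => h1 _, fun c hc => ?_⟩
  set c' := c.image τ with hc'
  have hcnt : ∀ j, ((c'.filter (fun i' => cluster i' = j)).card : ℕ)
      = (c.filter (fun i' => cluster i' = j)).card := by
    intro j
    have h : c'.filter (fun i' => cluster i' = j)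
        = (c.filter (fun i' => cluster (τ i') = j)).image τ := by
      ext x
      simp only [Finset.mem_filter, Finset.mem_image, hc']
      constructor
      · rintro ⟨⟨a, ha, rfl⟩, hx⟩
        exact ⟨a, ⟨ha, hx⟩, rfl⟩
      · rintro ⟨a, ⟨ha, hx⟩, rfl⟩
        exact ⟨⟨a, ha, rfl⟩, hx⟩
    rw [h, Finset.card_image_of_injective _ τ.injective]
    congr 1
    exact Finset.filter_congr (fun x _ => by simp [hτ x])
  have hkey : ∑ i ∈ c, ρ (cluster i) (fun j => (c.filter (fun i' => cluster i' = j)).card) * π (τ i)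
      = ∑ i' ∈ c', ρ (cluster i') (fun j => (c'.filter (fun i' => cluster i' = j)).card) * π i' := by
    rw [hc', Finset.sum_image (fun a _ b _ h => τ.injective h)]
    refine Finset.sum_congr rfl fun i _ => ?_
    rw [hτ i]
    exact congrArg (fun t => ρ (cluster i) t * π (τ i)) (funext fun j => (hcnt j).symm)
  rw [hkey]
  exact h2 c' (hc.image _)

lemma aux_sum_swap (d π : Fin N → ℝ) {i l : Fin N} (hil : i ≠ l) :
    ∑ j, d j * π (Equiv.swap i l j)
      = (∑ j, d j * π j) + (d i - d l) * (π l - π i) := by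
  have hiu : i ∈ (univ : Finset (Fin N)) := mem_univ i
  have hl : l ∈ (univ : Finset (Fin N)).erase i := by
    simp [Finset.mem_erase, hil.symm]
  rw [← Finset.add_sum_erase _ (fun j => d j * π (Equiv.swap i l j)) hiu,
      ← Finset.add_sum_erase _ (fun j => d j * π (Equiv.swap i l j)) hl,
      ← Finset.add_sum_erase _ (fun j => d j * π j) hiu,
      ← Finset.add_sum_erase _ (fun j => d j * π j) hl]
  have hrest : ∑ j ∈ ((univ.erase i).erase l), d j * π (Equiv.swap i l j)
      = ∑ j ∈ ((univ.erase i).erase l), d j * π j := by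
    refine Finset.sum_congr rfl fun j hj => ?_
    simp only [Finset.mem_erase] at hj
    rw [Equiv.swap_apply_of_ne_of_ne hj.2.1 hj.1]
  rw [hrest, Equiv.swap_apply_left, Equiv.swap_apply_right]
  ring

end aux

/-- For the dual LP with multi-cluster cardinality-based rates, if an
optimal solution exists then there exists an optimal solution π* whose values within
each cluster are ordered consistently with the demands: d_i ≥ d_l implies
π*_i ≥ π*_l for links i, l in the same cluster. -/
theorem stmt_5 (N K : ℕ) (cluster : Fin N → Fin K) (d : Fin N → ℝ)
    (ρ : Fin K → (Fin K → ℕ) → ℝ)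
    (Feas : (Fin N → ℝ) → Prop)
    (hFeas : ∀ π, Feas π ↔ ((∀ i, 0 ≤ π i) ∧
      ∀ c : Finset (Fin N), c.Nonempty →
        ∑ i ∈ c, ρ (cluster i) (fun j => (c.filter (fun i' => cluster i' = j)).card) * π i ≤ 1))
    (hopt : ∃ π, Feas π ∧ ∀ π', Feas π' → ∑ i, d i * π' i ≤ ∑ i, d i * π i) :
    ∃ π, Feas π ∧ (∀ π', Feas π' → ∑ i, d i * π' i ≤ ∑ i, d i * π i) ∧
      ∀ i l, cluster i = cluster l → d l ≤ d i → π l ≤ π i := by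
  obtain ⟨π₀, hπ₀F, hπ₀opt⟩ := hopt
  rw [hFeas] at hπ₀F
  obtain ⟨h01, h02⟩ := hπ₀F
  -- maximize the objective over cluster-preserving permutations
  set S : Finset (Equiv.Perm (Fin N)) :=
    Finset.univ.filter (fun τ => ∀ i, cluster (τ i) = cluster i) with hS
  have hmemS : ∀ τ : Equiv.Perm (Fin N), τ ∈ S ↔ ∀ i, cluster (τ i) = cluster i := by
    intro τ; simp [hS]
  have hSne : S.Nonempty := ⟨1, by simp [hmemS]⟩
  obtain ⟨σ, hσS, hσmax⟩ := S.exists_max_image (fun τ => ∑ i, d i * π₀ (τ i)) hSne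
  have hσc : ∀ i, cluster (σ i) = cluster i := (hmemS σ).1 hσS
  set π₁ : Fin N → ℝ := fun i => π₀ (σ i) with hπ₁
  have h1feas := aux_feas_comp cluster ρ π₀ h01 h02 σ hσc
  have h11 : ∀ i, 0 ≤ π₁ i := h1feas.1
  have h12 : ∀ c : Finset (Fin N), c.Nonempty →
      ∑ i ∈ c, ρ (cluster i) (fun j => (c.filter (fun i' => cluster i' = j)).card) * π₁ i ≤ 1 :=
    h1feas.2
  -- monotonicity of π₁ w.r.t. strict demand inequalities, within clusters
  have hmono : ∀ i l, cluster i = cluster l → d l < d i → π₁ l ≤ π₁ i := by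
    intro i l hcl hd
    by_contra hlt
    push_neg at hlt
    have hil : i ≠ l := fun h => absurd (h ▸ hd) (lt_irrefl _)
    have hσ'S : σ * Equiv.swap i l ∈ S := by
      rw [hmemS]; intro j
      rw [Equiv.Perm.mul_apply, hσc, aux_swap_pres cluster hcl j]
    have hle := hσmax (σ * Equiv.swap i l) hσ'S
    simp only [Equiv.Perm.mul_apply] at hle
    have heq : ∑ j, d j * π₀ (σ (Equiv.swap i l j)) = ∑ j, d j * π₁ (Equiv.swap i l j) := rfl
    rw [heq, aux_sum_swap d π₁ hil] at hle
    have hobj : ∑ j, d j * π₀ (σ j) = ∑ j, d j * π₁ j := rfl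
    rw [hobj] at hle
    nlinarith
  -- symmetrize over the group of (cluster, d)-preserving permutations
  set G : Finset (Equiv.Perm (Fin N)) :=
    Finset.univ.filter
      (fun τ => (∀ i, cluster (τ i) = cluster i) ∧ ∀ i, d (τ i) = d i) with hG
  have hmemG : ∀ τ : Equiv.Perm (Fin N),
      τ ∈ G ↔ (∀ i, cluster (τ i) = cluster i) ∧ ∀ i, d (τ i) = d i := by
    intro τ; simp [hG]
  have hG1 : (1 : Equiv.Perm (Fin N)) ∈ G := by simp [hmemG]
  have hGpos : (0 : ℝ) < G.card := by
    exact_mod_cast Finset.card_pos.mpr ⟨1, hG1⟩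
  refine ⟨fun i => (∑ τ ∈ G, π₁ (τ i)) / G.card, ?_, ?_, ?_⟩
  · -- feasibility
    rw [hFeas]
    constructor
    · intro i
      exact div_nonneg (Finset.sum_nonneg fun τ _ => h11 _) (le_of_lt hGpos)
    · intro c hc
      have hfeasτ : ∀ τ ∈ G,
          ∑ i ∈ c, ρ (cluster i) (fun j => (c.filter (fun i' => cluster i' = j)).card)
            * π₁ (τ i) ≤ 1 := by
        intro τ hτ
        exact (aux_feas_comp cluster ρ π₁ h11 h12 τ ((hmemG τ).1 hτ).1).2 c hc
      have hswap : ∑ i ∈ c, ρ (cluster i) (fun j => (c.filter (fun i' => cluster i' = j)).card)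
            * ((∑ τ ∈ G, π₁ (τ i)) / G.card)
          = (∑ τ ∈ G, ∑ i ∈ c,
              ρ (cluster i) (fun j => (c.filter (fun i' => cluster i' = j)).card) * π₁ (τ i))
            / G.card := by
        simp_rw [← mul_div_assoc, Finset.mul_sum]
        rw [← Finset.sum_div, Finset.sum_comm]
      rw [hswap, div_le_one hGpos]
      calc (∑ τ ∈ G, ∑ i ∈ c,
              ρ (cluster i) (fun j => (c.filter (fun i' => cluster i' = j)).card) * π₁ (τ i))
          ≤ ∑ τ ∈ G, (1 : ℝ) := Finset.sum_le_sum hfeasτ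
        _ = G.card := by simp
  · -- optimality
    intro π' hπ'
    have hinner : ∀ τ ∈ G, ∑ i, d i * π₁ (τ i) = ∑ i, d i * π₁ i := by
      intro τ hτ
      obtain ⟨-, hdτ⟩ := (hmemG τ).1 hτ
      calc ∑ i, d i * π₁ (τ i) = ∑ i, d (τ i) * π₁ (τ i) :=
            Finset.sum_congr rfl fun i _ => by rw [hdτ i]
        _ = ∑ i, d i * π₁ i := Equiv.sum_comp τ (fun j => d j * π₁ j)
    have hobjstar : ∑ i, d i * ((∑ τ ∈ G, π₁ (τ i)) / G.card) = ∑ i, d i * π₁ i := by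
      have h1 : ∑ i, d i * ((∑ τ ∈ G, π₁ (τ i)) / G.card)
          = (∑ τ ∈ G, ∑ i, d i * π₁ (τ i)) / G.card := by
        simp_rw [← mul_div_assoc, Finset.mul_sum]
        rw [← Finset.sum_div, Finset.sum_comm]
      rw [h1, Finset.sum_congr rfl hinner, Finset.sum_const, nsmul_eq_mul]
      field_simp
    rw [hobjstar]
    have h0le1 : ∑ i, d i * π₀ i ≤ ∑ i, d i * π₁ i := by
      simpa using hσmax 1 ((hmemS 1).2 (by simp))
    exact le_trans (hπ₀opt π' hπ') h0le1
  · -- ordering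
    intro i l hcl hdl
    rcases eq_or_lt_of_le hdl with heq | hlt
    · -- equal demands : symmetry under the swap gives equality
      have hswapG : ∀ τ ∈ G, τ * Equiv.swap i l ∈ G := by
        intro τ hτ
        obtain ⟨hc, hd⟩ := (hmemG τ).1 hτ
        rw [hmemG]
        refine ⟨fun j => ?_, fun j => ?_⟩
        · rw [Equiv.Perm.mul_apply, hc, aux_swap_pres cluster hcl j]
        · rw [Equiv.Perm.mul_apply, hd, aux_swap_pres d heq.symm j]
      have hsum : ∑ τ ∈ G, π₁ (τ l) = ∑ τ ∈ G, π₁ (τ i) := by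
        refine Finset.sum_equiv (Equiv.mulRight (Equiv.swap i l)) ?_ ?_
        · intro τ
          simp only [Equiv.coe_mulRight]
          constructor
          · intro hτ; exact hswapG τ hτ
          · intro hτ
            have := hswapG _ hτ
            rwa [mul_assoc, Equiv.swap_mul_self, mul_one] at this
        · intro τ _
          simp only [Equiv.coe_mulRight, Equiv.Perm.mul_apply, Equiv.swap_apply_left]
      simp only []
      rw [hsum]
    · -- strict inequality : termwise comparison
      have hterm : ∀ τ ∈ G, π₁ (τ l) ≤ π₁ (τ i) := by
        intro τ hτ
        obtain ⟨hc, hd⟩ := (hmemG τ).1 hτ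
        exact hmono (τ i) (τ l) (by rw [hc, hc, hcl]) (by rw [hd, hd]; exact hlt)
      show (∑ τ ∈ G, π₁ (τ l)) / (G.card : ℝ) ≤ (∑ τ ∈ G, π₁ (τ i)) / (G.card : ℝ)
      gcongr with τ hτ
      exact hterm τ hτ
end

section
/- Suppose the links are partitioned into K clusters with multi-cluster cardinality-based rates, and suppose for every inter-cluster group c (a group intersecting at least two clusters) and every cluster j intersecting c, the single-link rate R_j of cluster j satisfies R_j ≥ ∑_{j'} r^{j'}_{g(c)} |c_{j'}| (the sum-rate of c). Then replacing c (run for time t_c) by single-link activations of each link in c, with link durations r^j_{g(c)} t_c / R_j for links of cluster j, empties the same demand and uses total time ∑_j |c_j| r^j_{g(c)} t_c / R_j ≤ t_c. -/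
/-- Replacing an inter-cluster group c (run for time t) by single-link
activations of duration r^j t / R_j per cluster-j link empties the same demand, and
the total time ∑_j |c_j| r^j t / R_j is at most t, provided each single-link rate
R_j dominates the sum-rate of c. -/
theorem stmt_9 (K : ℕ) (r : Fin K → ℝ) (hr : ∀ j, 0 ≤ r j)
    (m : Fin K → ℕ)
    (hinter : 1 < (Finset.univ.filter (fun j => m j ≠ 0)).card)
    (R : Fin K → ℝ) (hR : ∀ j, 0 < R j)
    (hdom : ∀ j, m j ≠ 0 → (∑ j', r j' * (m j' : ℝ)) ≤ R j)
    (t : ℝ) (ht : 0 ≤ t) :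
    (∀ j, R j * (r j * t / R j) = r j * t) ∧
    (∑ j, (m j : ℝ) * (r j * t / R j)) ≤ t := by
  constructor
  · intro j
    rw [mul_div_assoc', mul_comm (R j), mul_div_assoc, div_self (ne_of_gt (hR j)), mul_one]
  · set S := ∑ j', r j' * (m j' : ℝ) with hS
    have hS0 : 0 ≤ S := Finset.sum_nonneg fun j _ =>
      mul_nonneg (hr j) (Nat.cast_nonneg _)
    rcases eq_or_lt_of_le hS0 with hSeq | hSpos
    · have hall : ∀ j ∈ Finset.univ, r j * (m j : ℝ) = 0 := by
        intro j _
        have := (Finset.sum_eq_zero_iff_of_nonneg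
          (fun j _ => mul_nonneg (hr j) (Nat.cast_nonneg _))).mp hSeq.symm
        exact this j (Finset.mem_univ j)
      have : (∑ j, (m j : ℝ) * (r j * t / R j)) = 0 := by
        apply Finset.sum_eq_zero
        intro j _
        have h := hall j (Finset.mem_univ j)
        rcases mul_eq_zero.mp h with h | h
        · rw [h]; ring
        · rw [h]; ring
      linarith
    · have key : ∀ j, (m j : ℝ) * (r j * t / R j) ≤ (m j : ℝ) * r j * t / S := by
        intro j
        by_cases hm : m j = 0
        · simp [hm]
        · have hdomj := hdom j hm
          have h1 : (m j : ℝ) * r j * t ≥ 0 :=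
            mul_nonneg (mul_nonneg (Nat.cast_nonneg _) (hr j)) ht
          have h2 : (m j : ℝ) * (r j * t / R j) = (m j : ℝ) * r j * t / R j := by ring
          rw [h2]
          exact div_le_div_of_nonneg_left h1 hSpos hdomj
      have hsum : (∑ j, (m j : ℝ) * (r j * t / R j)) ≤ ∑ j, (m j : ℝ) * r j * t / S :=
        Finset.sum_le_sum fun j _ => key j
      have heq : (∑ j, (m j : ℝ) * r j * t / S) = t := by
        rw [← Finset.sum_div]
        have : (∑ j, (m j : ℝ) * r j * t) = S * t := by
          rw [hS, Finset.sum_mul]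
          apply Finset.sum_congr rfl
          intro j _; ring
        rw [this, mul_comm, mul_div_assoc, div_self (ne_of_gt hSpos), mul_one]
      linarith
end

section
/- Under the hypothesis that for every cluster j the single-link rate R_j is at least the sum-rate of every inter-cluster group, the MTSP with multi-cluster cardinality-based rates admits an optimal schedule using only intra-cluster groups (groups whose links all lie in a single cluster). -/
open Finset


lemma mtsp_singleton_g {N K : ℕ} (cluster : Fin N → Fin K)
    (g : Finset (Fin N) → Fin K → ℕ)
    (hg : ∀ c j, g c j = (c.filter (fun i => cluster i = j)).card)
    (i : Fin N) : g {i} = fun j' => if j' = cluster i then 1 else 0 := by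
  funext j'
  rw [hg, Finset.filter_singleton]
  by_cases h : cluster i = j'
  · simp [h]
  · simp [h, Ne.symm h]

lemma mtsp_transform {N K : ℕ} (cluster : Fin N → Fin K)
    (ρ : Fin K → (Fin K → ℕ) → ℝ) (hρ : ∀ j v, 0 ≤ ρ j v)
    (g : Finset (Fin N) → Fin K → ℕ)
    (hg : ∀ c j, g c j = (c.filter (fun i => cluster i = j)).card)
    (hRpos : ∀ j, 0 < ρ j (fun j' => if j' = j then 1 else 0))
    (hdom : ∀ j, ∀ c : Finset (Fin N), c.Nonempty →
      (∃ i ∈ c, ∃ l ∈ c, cluster i ≠ cluster l) →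
      (∑ i ∈ c, ρ (cluster i) (g c)) ≤ ρ j (fun j' => if j' = j then 1 else 0))
    (t' : Finset (Fin N) → ℝ) (ht'0 : ∀ c, 0 ≤ t' c) :
    ∃ t'' : Finset (Fin N) → ℝ, (∀ c, 0 ≤ t'' c) ∧
      (∀ i, ∑ c : Finset (Fin N), (if i ∈ c then ρ (cluster i) (g c) * t'' c else 0)
          = ∑ c : Finset (Fin N), (if i ∈ c then ρ (cluster i) (g c) * t' c else 0)) ∧
      (∀ c, t'' c ≠ 0 → ∀ i ∈ c, ∀ l ∈ c, cluster i = cluster l) ∧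
      (∑ c : Finset (Fin N), t'' c) ≤ ∑ c : Finset (Fin N), t' c := by
  classical
  set Rr : Fin N → ℝ := fun i => ρ (cluster i) (g {i}) with hRrdef
  have hRr : ∀ i, 0 < Rr i := by
    intro i
    have := hRpos (cluster i)
    rw [hRrdef]
    simpa [mtsp_singleton_g cluster g hg i] using this
  set Bad : Finset (Fin N) → Prop :=
    fun c => ∃ i ∈ c, ∃ l ∈ c, cluster i ≠ cluster l with hBaddef
  have hBadSingle : ∀ i : Fin N, ¬ Bad {i} := by
    rintro i ⟨a, ha, b, hb, hab⟩
    simp only [Finset.mem_singleton] at ha hb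
    exact hab (by rw [ha, hb])
  -- key bound: for a bad group, serving its links by singletons takes no more time
  have key : ∀ c' : Finset (Fin N), Bad c' →
      (∑ i ∈ c', ρ (cluster i) (g c') * t' c' / Rr i) ≤ t' c' := by
    intro c' hb
    have hne : c'.Nonempty := by
      obtain ⟨i, hi, _⟩ := hb
      exact ⟨i, hi⟩
    set S : ℝ := ∑ i ∈ c', ρ (cluster i) (g c') with hSdef
    have hS0 : 0 ≤ S := Finset.sum_nonneg fun i _ => hρ _ _
    rcases eq_or_lt_of_le hS0 with hS | hS
    · -- all rates zero
      have hall : ∀ i ∈ c', ρ (cluster i) (g c') = 0 := by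
        intro i hi
        have := (Finset.sum_eq_zero_iff_of_nonneg (fun i _ => hρ (cluster i) (g c'))).mp hS.symm
        exact this i hi
      calc (∑ i ∈ c', ρ (cluster i) (g c') * t' c' / Rr i)
          = 0 := Finset.sum_eq_zero fun i hi => by rw [hall i hi]; ring
        _ ≤ t' c' := ht'0 c'
    · have hSle : ∀ i : Fin N, S ≤ Rr i := by
        intro i
        have := hdom (cluster i) c' hne hb
        rw [hRrdef]
        simpa [mtsp_singleton_g cluster g hg i] using this
      calc (∑ i ∈ c', ρ (cluster i) (g c') * t' c' / Rr i)
          ≤ ∑ i ∈ c', ρ (cluster i) (g c') * t' c' / S := by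
            refine Finset.sum_le_sum fun i _ => ?_
            exact div_le_div_of_nonneg_left (mul_nonneg (hρ _ _) (ht'0 c')) hS (hSle i)
        _ = S * t' c' / S := by rw [← Finset.sum_div, ← Finset.sum_mul]
        _ = t' c' := by rw [mul_comm, mul_div_assoc, div_self hS.ne', mul_one]
  -- the replacement schedule
  refine ⟨fun c => (if Bad c then 0 else t' c) +
      ∑ c' : Finset (Fin N), (if Bad c' then
        ∑ i ∈ c', (if c = {i} then ρ (cluster i) (g c') * t' c' / Rr i else 0) else 0),
    ?_, ?_, ?_, ?_⟩
  · intro c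
    apply add_nonneg
    · split_ifs with h
      · exact le_refl 0
      · exact ht'0 c
    · apply Finset.sum_nonneg
      intro c' _
      split_ifs with h
      · apply Finset.sum_nonneg
        intro i _
        split_ifs with h2
        · exact div_nonneg (mul_nonneg (hρ _ _) (ht'0 c')) (hRr i).le
        · exact le_refl 0
      · exact le_refl 0
  · -- demand preservation
    intro i0
    have hsplit : ∀ c : Finset (Fin N),
        (if i0 ∈ c then ρ (cluster i0) (g c) *
          ((if Bad c then 0 else t' c) +
            ∑ c' : Finset (Fin N), (if Bad c' then
              ∑ i ∈ c', (if c = {i} then ρ (cluster i) (g c') * t' c' / Rr i else 0) else 0))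
          else 0)
        = (if i0 ∈ c then ρ (cluster i0) (g c) * (if Bad c then 0 else t' c) else 0)
          + (if i0 ∈ c then ρ (cluster i0) (g c) *
              ∑ c' : Finset (Fin N), (if Bad c' then
                ∑ i ∈ c', (if c = {i} then ρ (cluster i) (g c') * t' c' / Rr i else 0) else 0)
              else 0) := by
      intro c
      split_ifs with h <;> ring
    rw [Finset.sum_congr rfl (fun c _ => hsplit c), Finset.sum_add_distrib]
    -- compute the second (extra) sum
    have hextra : (∑ c : Finset (Fin N), (if i0 ∈ c then ρ (cluster i0) (g c) *
              ∑ c' : Finset (Fin N), (if Bad c' then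
                ∑ i ∈ c', (if c = {i} then ρ (cluster i) (g c') * t' c' / Rr i else 0) else 0)
              else 0))
        = ∑ c' : Finset (Fin N), (if Bad c' then
            (if i0 ∈ c' then ρ (cluster i0) (g c') * t' c' else 0) else 0) := by
      have h1 : ∀ c : Finset (Fin N), (if i0 ∈ c then ρ (cluster i0) (g c) *
              ∑ c' : Finset (Fin N), (if Bad c' then
                ∑ i ∈ c', (if c = {i} then ρ (cluster i) (g c') * t' c' / Rr i else 0) else 0)
              else 0)
          = ∑ c' : Finset (Fin N), (if Bad c' then
                ∑ i ∈ c', (if i0 ∈ c ∧ c = {i} then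
                  ρ (cluster i0) (g c) * (ρ (cluster i) (g c') * t' c' / Rr i) else 0) else 0) := by
        intro c
        split_ifs with h
        · rw [Finset.mul_sum]
          refine Finset.sum_congr rfl fun c' _ => ?_
          split_ifs with h2
          · rw [Finset.mul_sum]
            refine Finset.sum_congr rfl fun i _ => ?_
            by_cases h3 : c = {i}
            · rw [if_pos h3, if_pos ⟨h, h3⟩]
            · rw [if_neg h3, mul_zero, if_neg (fun hc => h3 hc.2)]
          · ring
        · symm
          refine Finset.sum_eq_zero fun c' _ => ?_
          split_ifs with h2
          · refine Finset.sum_eq_zero fun i _ => ?_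
            simp [h]
          · rfl
      rw [Finset.sum_congr rfl (fun c _ => h1 c), Finset.sum_comm]
      refine Finset.sum_congr rfl fun c' _ => ?_
      by_cases h2 : Bad c'
      · simp only [h2, if_true]
        rw [Finset.sum_comm]
        have h3 : ∀ i ∈ c', (∑ c : Finset (Fin N), (if i0 ∈ c ∧ c = {i} then
                  ρ (cluster i0) (g c) * (ρ (cluster i) (g c') * t' c' / Rr i) else 0))
            = (if i = i0 then Rr i0 * (ρ (cluster i0) (g c') * t' c' / Rr i0) else 0) := by
          intro i _
          by_cases h4 : i = i0
          · subst h4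
            rw [if_pos rfl]
            rw [Finset.sum_eq_single ({i} : Finset (Fin N))]
            · simp [hRrdef]
            · intro b _ hb
              rw [if_neg]
              rintro ⟨_, rfl⟩
              exact hb rfl
            · simp
          · rw [if_neg h4]
            refine Finset.sum_eq_zero fun c _ => ?_
            rw [if_neg]
            rintro ⟨hmem, rfl⟩
            exact h4 (Finset.mem_singleton.mp hmem).symm
        rw [Finset.sum_congr rfl h3, Finset.sum_ite_eq' c' i0]
        rw [mul_div_cancel₀ _ (hRr i0).ne']
      · simp [h2]
    rw [hextra, ← Finset.sum_add_distrib]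
    refine Finset.sum_congr rfl fun c _ => ?_
    by_cases hb : Bad c <;> by_cases hm : i0 ∈ c <;> simp [hb, hm]
  · -- intra-cluster only
    intro c hne i hi l hl
    by_contra hcl
    apply hne
    have hb : Bad c := ⟨i, hi, l, hl, hcl⟩
    show (if Bad c then 0 else t' c) +
      (∑ c' : Finset (Fin N), (if Bad c' then
        ∑ i ∈ c', (if c = {i} then ρ (cluster i) (g c') * t' c' / Rr i else 0) else 0)) = 0
    rw [if_pos hb, zero_add]
    refine Finset.sum_eq_zero fun c' _ => ?_
    split_ifs with h
    · refine Finset.sum_eq_zero fun i' _ => ?_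
      rw [if_neg]
      intro hc
      exact hBadSingle i' (hc ▸ hb)
    · rfl
  · -- cost does not increase
    rw [Finset.sum_add_distrib]
    have hswap : (∑ c : Finset (Fin N), ∑ c' : Finset (Fin N), (if Bad c' then
        ∑ i ∈ c', (if c = {i} then ρ (cluster i) (g c') * t' c' / Rr i else 0) else 0))
        = ∑ c' : Finset (Fin N), (if Bad c' then
            (∑ i ∈ c', ρ (cluster i) (g c') * t' c' / Rr i) else 0) := by
      rw [Finset.sum_comm]
      refine Finset.sum_congr rfl fun c' _ => ?_
      by_cases h2 : Bad c'
      · simp only [h2, if_true]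
        rw [Finset.sum_comm]
        refine Finset.sum_congr rfl fun i _ => ?_
        rw [Finset.sum_ite_eq' Finset.univ ({i} : Finset (Fin N))
          (fun _ => ρ (cluster i) (g c') * t' c' / Rr i), if_pos (Finset.mem_univ _)]
      · simp [h2]
    rw [hswap]
    have h2 : (∑ c' : Finset (Fin N), (if Bad c' then
        (∑ i ∈ c', ρ (cluster i) (g c') * t' c' / Rr i) else 0))
        ≤ ∑ c' : Finset (Fin N), (if Bad c' then t' c' else 0) := by
      refine Finset.sum_le_sum fun c' _ => ?_
      split_ifs with h
      · exact key c' h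
      · exact le_refl 0
    calc (∑ c : Finset (Fin N), (if Bad c then 0 else t' c))
          + ∑ c' : Finset (Fin N), (if Bad c' then
            (∑ i ∈ c', ρ (cluster i) (g c') * t' c' / Rr i) else 0)
        ≤ (∑ c : Finset (Fin N), (if Bad c then 0 else t' c))
          + ∑ c' : Finset (Fin N), (if Bad c' then t' c' else 0) := by
          exact add_le_add le_rfl h2
      _ = ∑ c : Finset (Fin N), t' c := by
          rw [← Finset.sum_add_distrib]
          refine Finset.sum_congr rfl fun c _ => ?_
          split_ifs <;> ring


/-- If every cluster's single-link rate dominates the sum-rate of every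
inter-cluster group, the MTSP with multi-cluster cardinality-based rates admits an
optimal schedule using only intra-cluster groups. -/
theorem stmt_10 (N K : ℕ) (cluster : Fin N → Fin K)
    (d : Fin N → ℝ) (hd : ∀ i, 0 ≤ d i)
    (ρ : Fin K → (Fin K → ℕ) → ℝ) (hρ : ∀ j v, 0 ≤ ρ j v)
    (g : Finset (Fin N) → Fin K → ℕ)
    (hg : ∀ c j, g c j = (c.filter (fun i => cluster i = j)).card)
    (hRpos : ∀ j, 0 < ρ j (fun j' => if j' = j then 1 else 0))
    (hdom : ∀ j, ∀ c : Finset (Fin N), c.Nonempty →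
      (∃ i ∈ c, ∃ l ∈ c, cluster i ≠ cluster l) →
      (∑ i ∈ c, ρ (cluster i) (g c)) ≤ ρ j (fun j' => if j' = j then 1 else 0)) :
    ∃ t : Finset (Fin N) → ℝ, (∀ c, 0 ≤ t c) ∧
      (∀ i, ∑ c : Finset (Fin N), (if i ∈ c then ρ (cluster i) (g c) * t c else 0) = d i) ∧
      (∀ c, t c ≠ 0 → ∀ i ∈ c, ∀ l ∈ c, cluster i = cluster l) ∧
      (∀ t' : Finset (Fin N) → ℝ, (∀ c, 0 ≤ t' c) →
        (∀ i, ∑ c : Finset (Fin N), (if i ∈ c then ρ (cluster i) (g c) * t' c else 0) = d i) →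
        (∑ c : Finset (Fin N), t c) ≤ ∑ c : Finset (Fin N), t' c) := by
  classical
  set Rr : Fin N → ℝ := fun i => ρ (cluster i) (g {i}) with hRrdef
  have hRr : ∀ i, 0 < Rr i := by
    intro i
    have := hRpos (cluster i)
    rw [hRrdef]
    simpa [mtsp_singleton_g cluster g hg i] using this
  -- the singleton schedule
  set t0 : Finset (Fin N) → ℝ :=
    fun c => ∑ i : Fin N, (if c = {i} then d i / Rr i else 0) with ht0def
  have ht0nn : ∀ c, 0 ≤ t0 c := by
    intro c
    refine Finset.sum_nonneg fun i _ => ?_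
    split_ifs with h
    · exact div_nonneg (hd i) (hRr i).le
    · exact le_refl 0
  -- feasibility of the singleton schedule
  have ht0feas : ∀ i0, ∑ c : Finset (Fin N),
      (if i0 ∈ c then ρ (cluster i0) (g c) * t0 c else 0) = d i0 := by
    intro i0
    have h1 : ∀ c : Finset (Fin N),
        (if i0 ∈ c then ρ (cluster i0) (g c) * t0 c else 0)
        = ∑ i : Fin N, (if i0 ∈ c ∧ c = {i} then
            ρ (cluster i0) (g c) * (d i / Rr i) else 0) := by
      intro c
      rw [ht0def]
      split_ifs with h
      · rw [Finset.mul_sum]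
        refine Finset.sum_congr rfl fun i _ => ?_
        by_cases h3 : c = {i}
        · rw [if_pos h3, if_pos ⟨h, h3⟩]
        · rw [if_neg h3, mul_zero, if_neg (fun hc => h3 hc.2)]
      · symm
        refine Finset.sum_eq_zero fun i _ => ?_
        rw [if_neg (fun hc => h hc.1)]
    rw [Finset.sum_congr rfl (fun c _ => h1 c), Finset.sum_comm]
    have h3 : ∀ i : Fin N, (∑ c : Finset (Fin N), (if i0 ∈ c ∧ c = {i} then
              ρ (cluster i0) (g c) * (d i / Rr i) else 0))
        = (if i = i0 then Rr i0 * (d i0 / Rr i0) else 0) := by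
      intro i
      by_cases h4 : i = i0
      · subst h4
        rw [if_pos rfl]
        rw [Finset.sum_eq_single ({i} : Finset (Fin N))]
        · simp [hRrdef]
        · intro b _ hb
          rw [if_neg]
          rintro ⟨_, rfl⟩
          exact hb rfl
        · simp
      · rw [if_neg h4]
        refine Finset.sum_eq_zero fun c _ => ?_
        rw [if_neg]
        rintro ⟨hmem, rfl⟩
        exact h4 (Finset.mem_singleton.mp hmem).symm
    rw [Finset.sum_congr rfl (fun i _ => h3 i), Finset.sum_ite_eq' Finset.univ i0,
      if_pos (Finset.mem_univ _), mul_div_cancel₀ _ (hRr i0).ne']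
  set T0 : ℝ := ∑ c : Finset (Fin N), t0 c with hT0def
  -- the truncated feasible set
  set A : Set (Finset (Fin N) → ℝ) := {t | (∀ c, 0 ≤ t c) ∧
      (∀ i, ∑ c : Finset (Fin N), (if i ∈ c then ρ (cluster i) (g c) * t c else 0) = d i) ∧
      (∑ c : Finset (Fin N), t c) ≤ T0} with hAdef
  have ht0A : t0 ∈ A := ⟨ht0nn, ht0feas, le_refl T0⟩
  have hA_sub : A ⊆ Set.pi Set.univ (fun _ : Finset (Fin N) => Set.Icc (0:ℝ) T0) := by
    rintro t ⟨h0, _, hsum⟩ c _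
    exact ⟨h0 c, le_trans (Finset.single_le_sum (fun c _ => h0 c) (Finset.mem_univ c)) hsum⟩
  have hFcont : ∀ i : Fin N, Continuous (fun t : Finset (Fin N) → ℝ =>
      ∑ c : Finset (Fin N), (if i ∈ c then ρ (cluster i) (g c) * t c else 0)) := by
    intro i
    apply continuous_finset_sum
    intro c _
    by_cases h : i ∈ c
    · simp only [h, if_true]
      exact continuous_const.mul (continuous_apply c)
    · simp only [h, if_false]
      exact continuous_const
  have hsumcont : Continuous (fun t : Finset (Fin N) → ℝ => ∑ c : Finset (Fin N), t c) :=
    continuous_finset_sum _ fun c _ => continuous_apply c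
  have hclosed : IsClosed A := by
    have hAeq : A = (⋂ c : Finset (Fin N), {t : Finset (Fin N) → ℝ | 0 ≤ t c}) ∩
        ((⋂ i : Fin N, {t : Finset (Fin N) → ℝ |
          ∑ c : Finset (Fin N), (if i ∈ c then ρ (cluster i) (g c) * t c else 0) = d i}) ∩
         {t : Finset (Fin N) → ℝ | ∑ c : Finset (Fin N), t c ≤ T0}) := by
      ext t
      simp only [hAdef, Set.mem_setOf_eq, Set.mem_inter_iff, Set.mem_iInter]
    rw [hAeq]
    refine IsClosed.inter ?_ (IsClosed.inter ?_ ?_)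
    · exact isClosed_iInter fun c => isClosed_le continuous_const (continuous_apply c)
    · exact isClosed_iInter fun i => isClosed_eq (hFcont i) continuous_const
    · exact isClosed_le hsumcont continuous_const
  have hcompact : IsCompact A :=
    IsCompact.of_isClosed_subset (isCompact_univ_pi fun _ => isCompact_Icc) hclosed hA_sub
  obtain ⟨ts, htsA, hmin⟩ := hcompact.exists_isMinOn ⟨t0, ht0A⟩ hsumcont.continuousOn
  obtain ⟨h0s, hfeass, hboundeds⟩ := htsA
  -- transform the minimizer into an intra-cluster schedule
  obtain ⟨t'', h0'', hfeas'', hintra'', hcost''⟩ :=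
    mtsp_transform cluster ρ hρ g hg hRpos hdom ts h0s
  refine ⟨t'', h0'', ?_, hintra'', ?_⟩
  · intro i
    rw [hfeas'' i, hfeass i]
  · intro t' h0' hfeas'
    by_cases hle : (∑ c : Finset (Fin N), t' c) ≤ T0
    · have ht'A : t' ∈ A := ⟨h0', hfeas', hle⟩
      exact le_trans hcost'' (hmin ht'A)
    · exact le_trans hcost'' (le_trans hboundeds (le_of_lt (lt_of_not_ge hle)))
end

section
/- Suppose demands are uniform within each cluster and for every inter-cluster group c there exist, for each cluster j intersecting c, intra-cluster group cardinalities ℓ_j whose sum-rate (ℓ_j times the common rate at cardinality ℓ_j) is at least the sum-rate of c. Then the MTSP with multi-cluster cardinality-based rates admits an optimal schedule consisting only of intra-cluster groups. -/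
/-- Auxiliary counting lemma: the number of `k`-subsets of `S` containing a fixed
element `i ∈ S` is `(|S|-1).choose (k-1)` (for `k ≥ 1`). -/
lemma count_subsets_containing {α : Type*} [DecidableEq α] (S : Finset α) (i : α)
    (hi : i ∈ S) (k : ℕ) (hk : 1 ≤ k) :
    (((S.powersetCard k).filter (fun c => i ∈ c)).card) = (S.card - 1).choose (k - 1) := by
  have hbij : ((S.powersetCard k).filter (fun c => i ∈ c)).card
      = ((S.erase i).powersetCard (k - 1)).card := by
    refine Finset.card_bij' (fun c _ => c.erase i) (fun c _ => insert i c) ?_ ?_ ?_ ?_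
    · intro c hc
      rw [Finset.mem_filter, Finset.mem_powersetCard] at hc
      rw [Finset.mem_powersetCard]
      exact ⟨Finset.erase_subset_erase i hc.1.1,
        by rw [Finset.card_erase_of_mem hc.2, hc.1.2]⟩
    · intro c hc
      rw [Finset.mem_powersetCard] at hc
      have hic : i ∉ c := fun h => (Finset.mem_erase.mp (hc.1 h)).1 rfl
      rw [Finset.mem_filter, Finset.mem_powersetCard]
      refine ⟨⟨?_, ?_⟩, Finset.mem_insert_self i c⟩
      · intro a ha
        rcases Finset.mem_insert.mp ha with h | h
        · exact h ▸ hi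
        · exact Finset.mem_of_mem_erase (hc.1 h)
      · rw [Finset.card_insert_of_notMem hic, hc.2]
        omega
    · intro c hc
      rw [Finset.mem_filter] at hc
      exact Finset.insert_erase hc.2
    · intro c hc
      rw [Finset.mem_powersetCard] at hc
      have hic : i ∉ c := fun h => (Finset.mem_erase.mp (hc.1 h)).1 rfl
      exact Finset.erase_insert hic
  rw [hbij, Finset.card_powersetCard, Finset.card_erase_of_mem hi]

/-- With uniform demands within each cluster, if for every
inter-cluster group c and each cluster j intersecting c there is an intra-cluster
cardinality ℓ whose sum-rate dominates the sum-rate of c, then the MTSP with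
multi-cluster cardinality-based rates admits an optimal schedule consisting only of
intra-cluster groups. -/
theorem stmt_15 (N K : ℕ) (cluster : Fin N → Fin K)
    (d : Fin N → ℝ) (hd : ∀ i, 0 ≤ d i)
    (hunif : ∀ i l, cluster i = cluster l → d i = d l)
    (ρ : Fin K → (Fin K → ℕ) → ℝ) (hρ : ∀ j v, 0 ≤ ρ j v)
    (g : Finset (Fin N) → Fin K → ℕ)
    (hg : ∀ c j, g c j = (c.filter (fun i => cluster i = j)).card)
    (hdom : ∀ c : Finset (Fin N), c.Nonempty →
      (∃ i ∈ c, ∃ l ∈ c, cluster i ≠ cluster l) →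
      ∀ j, (c.filter (fun i => cluster i = j)).Nonempty →
        ∃ ℓ : ℕ, 1 ≤ ℓ ∧ ℓ ≤ (Finset.univ.filter (fun i => cluster i = j)).card ∧
          (∑ i ∈ c, ρ (cluster i) (g c)) ≤ (ℓ : ℝ) * ρ j (fun j' => if j' = j then ℓ else 0))
    (hfeas : ∃ t : Finset (Fin N) → ℝ, (∀ c, 0 ≤ t c) ∧
      ∀ i, ∑ c : Finset (Fin N), (if i ∈ c then ρ (cluster i) (g c) * t c else 0) = d i) :
    ∃ t : Finset (Fin N) → ℝ, (∀ c, 0 ≤ t c) ∧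
      (∀ i, ∑ c : Finset (Fin N), (if i ∈ c then ρ (cluster i) (g c) * t c else 0) = d i) ∧
      (∀ c, t c ≠ 0 → ∀ i ∈ c, ∀ l ∈ c, cluster i = cluster l) ∧
      (∀ t' : Finset (Fin N) → ℝ, (∀ c, 0 ≤ t' c) →
        (∀ i, ∑ c : Finset (Fin N), (if i ∈ c then ρ (cluster i) (g c) * t' c else 0) = d i) →
        (∑ c : Finset (Fin N), t c) ≤ ∑ c : Finset (Fin N), t' c) := by
  classical
  obtain ⟨t0, ht0, hfeas0⟩ := hfeas
  set clS : Fin K → Finset (Fin N) :=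
    fun j => Finset.univ.filter (fun i => cluster i = j) with hclS
  set n : Fin K → ℕ := fun j => (clS j).card with hn
  set vec : Fin K → ℕ → (Fin K → ℕ) := fun j ℓ j' => if j' = j then ℓ else 0 with hvec
  -- choose per-cluster maximizing cardinality
  have hex : ∀ j : Fin K, ∃ ℓ : ℕ, 1 ≤ ℓ ∧ (0 < n j → ℓ ≤ n j ∧
      ∀ m : ℕ, 1 ≤ m → m ≤ n j →
        (m : ℝ) * ρ j (vec j m) ≤ (ℓ : ℝ) * ρ j (vec j ℓ)) := by
    intro j
    rcases Nat.eq_zero_or_pos (n j) with h0 | hpos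
    · exact ⟨1, le_refl 1, fun h => absurd h0 (by omega)⟩
    · obtain ⟨ℓ, hℓmem, hℓmax⟩ := Finset.exists_max_image (Finset.Icc 1 (n j))
        (fun m : ℕ => (m : ℝ) * ρ j (vec j m)) ⟨1, by simp [Finset.mem_Icc]; omega⟩
      rw [Finset.mem_Icc] at hℓmem
      exact ⟨ℓ, hℓmem.1, fun _ =>
        ⟨hℓmem.2, fun m h1 h2 => hℓmax m (Finset.mem_Icc.mpr ⟨h1, h2⟩)⟩⟩
  choose L hL1 hLmax using hex
  set rr : Fin K → ℝ := fun j => ρ j (vec j (L j)) with hrr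
  have hrr0 : ∀ j, 0 ≤ rr j := fun j => hρ j _
  set M : Fin K → ℝ := fun j => (L j : ℝ) * rr j with hM
  set Drep : Fin K → ℝ := fun j => if h : (clS j).Nonempty then d h.choose else 0 with hDrep
  have hDmem : ∀ j i, cluster i = j → d i = Drep j := by
    intro j i hij
    have hiS : i ∈ clS j := by simp [hclS, hij]
    have hne : (clS j).Nonempty := ⟨i, hiS⟩
    have hch : cluster hne.choose = j := by
      have := hne.choose_spec
      simp only [hclS, Finset.mem_filter] at this
      exact this.2
    rw [hDrep]
    simp only [dif_pos hne]
    exact hunif i hne.choose (by rw [hij, hch])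
  have hDrep0 : ∀ j, 0 ≤ Drep j := by
    intro j
    rw [hDrep]
    by_cases h : (clS j).Nonempty
    · simp [dif_pos h, hd]
    · simp [dif_neg h]
  -- groups contained in a cluster have the expected cardinality vector
  have hgintra : ∀ j (c : Finset (Fin N)), c ⊆ clS j → g c = vec j c.card := by
    intro j c hc
    funext j'
    rw [hg]
    by_cases hjj : j' = j
    · subst hjj
      simp only [hvec, if_pos rfl]
      congr 1
      apply Finset.filter_true_of_mem
      intro i hi
      have := hc hi
      simp only [hclS, Finset.mem_filter] at this
      exact this.2
    · simp only [hvec, if_neg hjj]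
      rw [Finset.card_eq_zero, Finset.filter_eq_empty_iff]
      intro i hi
      have := hc hi
      simp only [hclS, Finset.mem_filter] at this
      rw [this.2]
      exact fun h => hjj h.symm
  -- if the best intra sum-rate of a cluster is 0, then its demands are 0
  have hzero : ∀ j, M j = 0 → ∀ i, cluster i = j → d i = 0 := by
    intro j hMj i hij
    have hiS : i ∈ clS j := by simp [hclS, hij]
    have hnj : 0 < n j := Finset.card_pos.mpr ⟨i, hiS⟩
    rw [← hfeas0 i]
    apply Finset.sum_eq_zero
    intro c _
    by_cases hic : i ∈ c
    · simp only [if_pos hic]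
      have hρ0 : ρ (cluster i) (g c) = 0 := by
        by_cases hintra : ∀ a ∈ c, ∀ b ∈ c, cluster a = cluster b
        · have hsub : c ⊆ clS j := by
            intro a ha
            simp only [hclS, Finset.mem_filter]
            exact ⟨Finset.mem_univ a, by rw [← hij]; exact hintra a ha i hic⟩
          have hgc := hgintra j c hsub
          have hcard1 : 1 ≤ c.card := Finset.card_pos.mpr ⟨i, hic⟩
          have hcardn : c.card ≤ n j := Finset.card_le_card hsub
          have hle : (c.card : ℝ) * ρ j (vec j c.card) ≤ 0 := by
            have h00 : (L j : ℝ) * ρ j (vec j (L j)) = 0 := hMj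
            have := (hLmax j hnj).2 c.card hcard1 hcardn
            linarith
          have hnn : 0 ≤ ρ j (vec j c.card) := hρ j _
          have h1 : (1 : ℝ) ≤ (c.card : ℝ) := by exact_mod_cast hcard1
          have : ρ j (vec j c.card) = 0 := by nlinarith
          rw [hij, hgc, this]
        · push_neg at hintra
          obtain ⟨a, ha, b, hb, hab⟩ := hintra
          obtain ⟨ℓ', h1, h2, hsle⟩ := hdom c ⟨i, hic⟩ ⟨a, ha, b, hb, hab⟩ j
            ⟨i, Finset.mem_filter.mpr ⟨hic, hij⟩⟩
          have hub : (ℓ' : ℝ) * ρ j (vec j ℓ') ≤ 0 := by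
            have h00 : (L j : ℝ) * ρ j (vec j (L j)) = 0 := hMj
            have := (hLmax j hnj).2 ℓ' h1 h2
            linarith
          have hsum0 : ∑ i' ∈ c, ρ (cluster i') (g c) = 0 :=
            le_antisymm (le_trans hsle hub)
              (Finset.sum_nonneg fun i' _ => hρ (cluster i') (g c))
          exact (Finset.sum_eq_zero_iff_of_nonneg
            (fun i' _ => hρ (cluster i') (g c))).mp hsum0 i hic
      rw [hρ0, zero_mul]
    · simp [hic]
  -- the schedule
  set τ : Fin K → ℝ :=
    fun j => Drep j / (rr j * (((n j - 1).choose (L j - 1) : ℕ) : ℝ)) with hτ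
  have hτ0 : ∀ j, 0 ≤ τ j := by
    intro j
    apply div_nonneg (hDrep0 j)
    exact mul_nonneg (hrr0 j) (Nat.cast_nonneg _)
  set t : Finset (Fin N) → ℝ :=
    fun c => ∑ j : Fin K, if c ∈ (clS j).powersetCard (L j) then τ j else 0 with htdef
  have htpos : ∀ c, 0 ≤ t c := by
    intro c
    apply Finset.sum_nonneg
    intro j _
    split
    · exact hτ0 j
    · exact le_refl 0
  -- the constraint is satisfied
  have hconstraint : ∀ i, ∑ c : Finset (Fin N),
      (if i ∈ c then ρ (cluster i) (g c) * t c else 0) = d i := by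
    intro i
    have hiS : i ∈ clS (cluster i) := Finset.mem_filter.mpr ⟨Finset.mem_univ i, rfl⟩
    have hnj : 0 < n (cluster i) := Finset.card_pos.mpr ⟨i, hiS⟩
    have hLn : L (cluster i) ≤ n (cluster i) := (hLmax (cluster i) hnj).1
    have hstep : ∀ c : Finset (Fin N), (if i ∈ c then ρ (cluster i) (g c) * t c else 0)
        = ∑ j : Fin K, (if i ∈ c ∧ c ∈ (clS j).powersetCard (L j) then
            ρ (cluster i) (g c) * τ j else 0) := by
      intro c
      by_cases hic : i ∈ c
      · simp [hic, htdef, Finset.mul_sum, mul_ite]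
      · simp [hic]
    have hinner : ∀ j : Fin K, (∑ c : Finset (Fin N),
        if i ∈ c ∧ c ∈ (clS j).powersetCard (L j) then ρ (cluster i) (g c) * τ j else 0)
        = if j = cluster i then
            ((((n j - 1).choose (L j - 1) : ℕ) : ℝ)) * (rr j * τ j) else 0 := by
      intro j
      by_cases hj : j = cluster i
      · have hiSj : i ∈ clS j := by rw [hj]; exact hiS
        have hpt : ∀ c : Finset (Fin N),
            (if i ∈ c ∧ c ∈ (clS j).powersetCard (L j) then ρ (cluster i) (g c) * τ j else 0)
            = if c ∈ ((clS j).powersetCard (L j)).filter (fun c => i ∈ c) then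
                rr j * τ j else 0 := by
          intro c
          by_cases hc : i ∈ c ∧ c ∈ (clS j).powersetCard (L j)
          · rw [if_pos hc, if_pos (Finset.mem_filter.mpr ⟨hc.2, hc.1⟩)]
            congr 1
            obtain ⟨hsub, hcard⟩ := Finset.mem_powersetCard.mp hc.2
            rw [← hj, hgintra j c hsub, hcard]
          · have hnot : c ∉ ((clS j).powersetCard (L j)).filter (fun c => i ∈ c) := by
              intro h
              rw [Finset.mem_filter] at h
              exact hc ⟨h.2, h.1⟩
            rw [if_neg hc, if_neg hnot]
        rw [if_pos hj]
        calc (∑ c : Finset (Fin N),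
              if i ∈ c ∧ c ∈ (clS j).powersetCard (L j) then ρ (cluster i) (g c) * τ j else 0)
            = ∑ c : Finset (Fin N),
                (if c ∈ ((clS j).powersetCard (L j)).filter (fun c => i ∈ c) then
                  rr j * τ j else 0) := Finset.sum_congr rfl fun c _ => hpt c
          _ = ∑ c ∈ Finset.univ ∩ (((clS j).powersetCard (L j)).filter (fun c => i ∈ c)),
                (rr j * τ j) := Finset.sum_ite_mem _ _ _
          _ = ((((clS j).powersetCard (L j)).filter (fun c => i ∈ c)).card : ℝ)
                * (rr j * τ j) := by
              rw [Finset.univ_inter, Finset.sum_const, nsmul_eq_mul]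
          _ = ((((n j - 1).choose (L j - 1) : ℕ) : ℝ)) * (rr j * τ j) := by
              rw [count_subsets_containing (clS j) i hiSj (L j) (hL1 j)]
      · rw [if_neg hj]
        apply Finset.sum_eq_zero
        intro c _
        rw [if_neg]
        rintro ⟨hic, hpow⟩
        have hsub := (Finset.mem_powersetCard.mp hpow).1
        have := hsub hic
        simp only [hclS, Finset.mem_filter] at this
        exact hj this.2.symm
    calc ∑ c : Finset (Fin N), (if i ∈ c then ρ (cluster i) (g c) * t c else 0)
        = ∑ c : Finset (Fin N), ∑ j : Fin K,
            (if i ∈ c ∧ c ∈ (clS j).powersetCard (L j) then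
              ρ (cluster i) (g c) * τ j else 0) := Finset.sum_congr rfl fun c _ => hstep c
      _ = ∑ j : Fin K, ∑ c : Finset (Fin N),
            (if i ∈ c ∧ c ∈ (clS j).powersetCard (L j) then
              ρ (cluster i) (g c) * τ j else 0) := Finset.sum_comm
      _ = ∑ j : Fin K, (if j = cluster i then
            ((((n j - 1).choose (L j - 1) : ℕ) : ℝ)) * (rr j * τ j) else 0) :=
          Finset.sum_congr rfl fun j _ => hinner j
      _ = ((((n (cluster i) - 1).choose (L (cluster i) - 1) : ℕ) : ℝ))
            * (rr (cluster i) * τ (cluster i)) := by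
          rw [Finset.sum_ite_eq' Finset.univ (cluster i)
            (fun j => ((((n j - 1).choose (L j - 1) : ℕ) : ℝ)) * (rr j * τ j))]
          simp
      _ = d i := by
          by_cases hrrj : rr (cluster i) = 0
          · have hM0 : M (cluster i) = 0 := by simp [hM, hrrj]
            rw [hzero (cluster i) hM0 i rfl]
            simp [hrrj]
          · have hC : 0 < (n (cluster i) - 1).choose (L (cluster i) - 1) := by
              apply Nat.choose_pos
              have := hL1 (cluster i)
              omega
            have hCne : ((((n (cluster i) - 1).choose (L (cluster i) - 1) : ℕ)) : ℝ) ≠ 0 :=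
              Nat.cast_ne_zero.mpr hC.ne'
            rw [hDmem (cluster i) i rfl]
            simp only [hτ]
            field_simp
  -- support : only intra-cluster groups
  have hsupp : ∀ c, t c ≠ 0 → ∀ i ∈ c, ∀ l ∈ c, cluster i = cluster l := by
    intro c hc i hi l hl
    have hex2 : ∃ j, (if c ∈ (clS j).powersetCard (L j) then τ j else 0) ≠ 0 := by
      by_contra h
      push_neg at h
      exact hc (Finset.sum_eq_zero fun j _ => h j)
    obtain ⟨j, hj⟩ := hex2
    have hcp : c ∈ (clS j).powersetCard (L j) := by
      by_contra h
      exact hj (if_neg h)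
    have hsub := (Finset.mem_powersetCard.mp hcp).1
    have h1 := hsub hi
    have h2 := hsub hl
    simp only [hclS, Finset.mem_filter] at h1 h2
    rw [h1.2, h2.2]
  -- total time of the schedule
  have htotal : ∑ c : Finset (Fin N), t c
      = ∑ j : Fin K, (((n j).choose (L j) : ℕ) : ℝ) * τ j := by
    simp only [htdef]
    rw [Finset.sum_comm]
    refine Finset.sum_congr rfl fun j _ => ?_
    rw [Finset.sum_ite_mem, Finset.univ_inter, Finset.sum_const, nsmul_eq_mul,
      Finset.card_powersetCard]
  -- optimality
  have hopt : ∀ t' : Finset (Fin N) → ℝ, (∀ c, 0 ≤ t' c) →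
      (∀ i, ∑ c : Finset (Fin N), (if i ∈ c then ρ (cluster i) (g c) * t' c else 0) = d i) →
      (∑ c : Finset (Fin N), t c) ≤ ∑ c : Finset (Fin N), t' c := by
    intro t' ht' hfeas'
    set sj : Fin K → Finset (Fin N) → ℝ :=
      fun j c => ∑ i ∈ c.filter (fun i => cluster i = j), ρ (cluster i) (g c) with hsj
    have hsj0 : ∀ j c, 0 ≤ sj j c := fun j c => Finset.sum_nonneg fun i _ => hρ _ _
    have hsplit : ∀ c : Finset (Fin N), ∑ j : Fin K, sj j c = ∑ i ∈ c, ρ (cluster i) (g c) :=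
      fun c => Finset.sum_fiberwise c cluster _
    have hfrac : ∀ c : Finset (Fin N), (∑ j : Fin K, sj j c / M j) ≤ 1 := by
      intro c
      have hs0 : 0 ≤ ∑ i ∈ c, ρ (cluster i) (g c) := Finset.sum_nonneg fun i _ => hρ _ _
      rcases eq_or_lt_of_le hs0 with hseq | hspos
      · have hall : ∀ j ∈ Finset.univ, sj j c = 0 := by
          rw [← Finset.sum_eq_zero_iff_of_nonneg (fun j _ => hsj0 j c)]
          rw [hsplit c, ← hseq]
        calc (∑ j : Fin K, sj j c / M j) = 0 :=
            Finset.sum_eq_zero (fun j hj => by rw [hall j hj, zero_div])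
          _ ≤ 1 := zero_le_one
      · have hcne : c.Nonempty := by
          rcases c.eq_empty_or_nonempty with h | h
          · exfalso
            rw [h, Finset.sum_empty] at hspos
            exact lt_irrefl 0 hspos
          · exact h
        have hjle : ∀ j : Fin K, sj j c / M j ≤ sj j c / (∑ i ∈ c, ρ (cluster i) (g c)) := by
          intro j
          rcases eq_or_lt_of_le (hsj0 j c) with hj0 | hjpos
          · rw [← hj0, zero_div, zero_div]
          · have hfil : (c.filter (fun i => cluster i = j)).Nonempty := by
              by_contra h
              rw [Finset.not_nonempty_iff_eq_empty] at h
              have : sj j c = 0 := by simp [hsj, h]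
              rw [this] at hjpos
              exact lt_irrefl 0 hjpos
            obtain ⟨i0, hi0⟩ := hfil
            have hi0c := (Finset.mem_filter.mp hi0).1
            have hi0j := (Finset.mem_filter.mp hi0).2
            have hnj : 0 < n j := Finset.card_pos.mpr
              ⟨i0, Finset.mem_filter.mpr ⟨Finset.mem_univ i0, hi0j⟩⟩
            have hMle : (∑ i ∈ c, ρ (cluster i) (g c)) ≤ M j := by
              by_cases hintra : ∀ a ∈ c, ∀ b ∈ c, cluster a = cluster b
              · have hsub : c ⊆ clS j := by
                  intro a ha
                  simp only [hclS, Finset.mem_filter]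
                  exact ⟨Finset.mem_univ a, by rw [← hi0j]; exact hintra a ha i0 hi0c⟩
                have hgc := hgintra j c hsub
                have hsc : (∑ i ∈ c, ρ (cluster i) (g c))
                    = (c.card : ℝ) * ρ j (vec j c.card) := by
                  rw [Finset.sum_congr rfl (fun a ha => by
                    have haj : cluster a = j := by
                      have := hsub ha
                      simp only [hclS, Finset.mem_filter] at this
                      exact this.2
                    rw [haj, hgc]), Finset.sum_const, nsmul_eq_mul]
                rw [hsc]
                exact (hLmax j hnj).2 c.card (Finset.card_pos.mpr hcne)
                  (Finset.card_le_card hsub)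
              · push_neg at hintra
                obtain ⟨a, ha, b, hb, hab⟩ := hintra
                obtain ⟨ℓ', h1, h2, hsle⟩ := hdom c hcne ⟨a, ha, b, hb, hab⟩ j ⟨i0, hi0⟩
                exact le_trans hsle ((hLmax j hnj).2 ℓ' h1 h2)
            exact div_le_div_of_nonneg_left (hsj0 j c) hspos hMle
        calc (∑ j : Fin K, sj j c / M j)
            ≤ ∑ j : Fin K, sj j c / (∑ i ∈ c, ρ (cluster i) (g c)) :=
              Finset.sum_le_sum fun j _ => hjle j
          _ = (∑ j : Fin K, sj j c) / (∑ i ∈ c, ρ (cluster i) (g c)) :=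
              (Finset.sum_div _ _ _).symm
          _ = (∑ i ∈ c, ρ (cluster i) (g c)) / (∑ i ∈ c, ρ (cluster i) (g c)) := by
              rw [hsplit c]
          _ ≤ 1 := le_of_eq (div_self hspos.ne')
    have hdem : ∀ j : Fin K, ∑ c : Finset (Fin N), sj j c * t' c = (n j : ℝ) * Drep j := by
      intro j
      have h1 : ∑ i ∈ clS j, d i = (n j : ℝ) * Drep j := by
        have hcongr : ∀ i ∈ clS j, d i = Drep j := by
          intro i hi
          simp only [hclS, Finset.mem_filter] at hi
          exact hDmem j i hi.2
        rw [Finset.sum_congr rfl hcongr, Finset.sum_const, nsmul_eq_mul]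
      have hset : ∀ c : Finset (Fin N), clS j ∩ c = c.filter (fun i => cluster i = j) := by
        intro c
        ext a
        simp only [hclS, Finset.mem_inter, Finset.mem_filter, Finset.mem_univ, true_and]
        tauto
      calc ∑ c : Finset (Fin N), sj j c * t' c
          = ∑ c : Finset (Fin N), ∑ i ∈ clS j,
              (if i ∈ c then ρ (cluster i) (g c) * t' c else 0) := by
            refine Finset.sum_congr rfl fun c _ => ?_
            rw [Finset.sum_ite_mem, hset c]
            simp only [hsj]
            rw [Finset.sum_mul]
        _ = ∑ i ∈ clS j, ∑ c : Finset (Fin N),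
              (if i ∈ c then ρ (cluster i) (g c) * t' c else 0) := Finset.sum_comm
        _ = ∑ i ∈ clS j, d i := Finset.sum_congr rfl fun i _ => hfeas' i
        _ = (n j : ℝ) * Drep j := h1
    have hperc : ∀ c : Finset (Fin N), (∑ j : Fin K, sj j c / M j) * t' c ≤ t' c := by
      intro c
      calc (∑ j : Fin K, sj j c / M j) * t' c
          ≤ 1 * t' c := mul_le_mul_of_nonneg_right (hfrac c) (ht' c)
        _ = t' c := one_mul _
    have hTeq : ∑ c : Finset (Fin N), t c = ∑ j : Fin K, (n j : ℝ) * Drep j / M j := by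
      rw [htotal]
      refine Finset.sum_congr rfl fun j _ => ?_
      by_cases hne : (clS j).Nonempty
      · have hnj : 0 < n j := Finset.card_pos.mpr hne
        have hLn := (hLmax j hnj).1
        by_cases hrrj : rr j = 0
        · simp [hτ, hrrj, hM]
        · have hC : 0 < (n j - 1).choose (L j - 1) := by
            apply Nat.choose_pos
            have := hL1 j
            omega
          have hCne : ((((n j - 1).choose (L j - 1) : ℕ)) : ℝ) ≠ 0 :=
            Nat.cast_ne_zero.mpr hC.ne'
          have hLne : ((L j : ℕ) : ℝ) ≠ 0 := by
            have := hL1 j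
            exact Nat.cast_ne_zero.mpr (by omega)
          have hid : (L j) * ((n j).choose (L j)) = (n j) * ((n j - 1).choose (L j - 1)) := by
            have h0 := Nat.add_one_mul_choose_eq (n j - 1) (L j - 1)
            have e1 : n j - 1 + 1 = n j := by omega
            have e2 : L j - 1 + 1 = L j := by
              have := hL1 j
              omega
            rw [e1, e2] at h0
            rw [h0]
            exact Nat.mul_comm _ _
          have hidR : ((L j : ℕ) : ℝ) * (((n j).choose (L j) : ℕ) : ℝ)
              = ((n j : ℕ) : ℝ) * ((((n j - 1).choose (L j - 1) : ℕ)) : ℝ) := by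
            exact_mod_cast hid
          simp only [hτ, hM]
          field_simp
          linear_combination Drep j * hidR
      · have hD0 : Drep j = 0 := by simp [hDrep, hne]
        simp [hτ, hD0]
    calc ∑ c : Finset (Fin N), t c
        = ∑ j : Fin K, (n j : ℝ) * Drep j / M j := hTeq
      _ = ∑ j : Fin K, (∑ c : Finset (Fin N), sj j c * t' c) / M j := by
          refine Finset.sum_congr rfl fun j _ => ?_
          rw [hdem j]
      _ = ∑ j : Fin K, ∑ c : Finset (Fin N), (sj j c / M j) * t' c := by
          refine Finset.sum_congr rfl fun j _ => ?_
          rw [Finset.sum_div]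
          refine Finset.sum_congr rfl fun c _ => ?_
          ring
      _ = ∑ c : Finset (Fin N), ∑ j : Fin K, (sj j c / M j) * t' c := Finset.sum_comm
      _ = ∑ c : Finset (Fin N), (∑ j : Fin K, sj j c / M j) * t' c := by
          refine Finset.sum_congr rfl fun c _ => ?_
          rw [Finset.sum_mul]
      _ ≤ ∑ c : Finset (Fin N), t' c := Finset.sum_le_sum fun c _ => hperc c
  exact ⟨t, htpos, hconstraint, hsupp, hopt⟩
end

section
/- In the column generation algorithm for the MTSP with multi-cluster cardinality-based rates, given nonnegative dual values π, for each fixed profile g the group minimizing the reduced cost 1 − ∑_{i∈c} r_{i,c} π_i among groups with profile g is obtained by choosing, in each cluster j, the |c_j| links with largest π values. Hence the subproblem min over all 2^N − 1 groups of the reduced cost equals the min over the (∏_j (n_j+1)) − 1 profile-restricted candidates. -/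
lemma aux_sum_le_of_card_eq {α : Type*} (s t : Finset α) (f : α → ℝ)
    (h : s.card = t.card) (hle : ∀ x ∈ s, ∀ y ∈ t, f x ≤ f y) :
    ∑ x ∈ s, f x ≤ ∑ y ∈ t, f y := by
  rcases t.eq_empty_or_nonempty with ht | ht
  · subst ht
    simp only [Finset.card_empty] at h
    simp [Finset.card_eq_zero.mp h]
  · calc ∑ x ∈ s, f x ≤ s.card • t.inf' ht f :=
          Finset.sum_le_card_nsmul s f _
            (fun x hx => Finset.le_inf' ht f (fun y hy => hle x hx y hy))
    _ = t.card • t.inf' ht f := by rw [h]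
    _ ≤ ∑ y ∈ t, f y :=
          Finset.card_nsmul_le_sum t f _ (fun y hy => Finset.inf'_le f hy)

/-- In column generation for the MTSP with multi-cluster
cardinality-based rates, for each profile the candidate group taking the links with
largest π values in each cluster minimizes the reduced cost among groups with that
profile; hence the subproblem minimum over all nonempty groups equals the minimum
over the profile-restricted candidates. -/
theorem stmt_16 (N K : ℕ) (cluster : Fin N → Fin K)
    (π : Fin N → ℝ) (hπ : ∀ i, 0 ≤ π i)
    (ρ : Fin K → (Fin K → ℕ) → ℝ) (hρ : ∀ j v, 0 ≤ ρ j v)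
    (g : Finset (Fin N) → Fin K → ℕ)
    (hg : ∀ c j, g c j = (c.filter (fun i => cluster i = j)).card)
    (cand : (Fin K → ℕ) → Finset (Fin N))
    (hcand : ∀ c : Finset (Fin N), g (cand (g c)) = g c)
    (htop : ∀ v : Fin K → ℕ, ∀ i ∈ cand v, ∀ l, l ∉ cand v →
      cluster l = cluster i → π l ≤ π i) :
    (∀ c : Finset (Fin N),
      1 - ∑ i ∈ cand (g c), ρ (cluster i) (g (cand (g c))) * π i
        ≤ 1 - ∑ i ∈ c, ρ (cluster i) (g c) * π i) ∧
    sInf {v | ∃ c : Finset (Fin N), c.Nonempty ∧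
        v = 1 - ∑ i ∈ c, ρ (cluster i) (g c) * π i}
      = sInf {v | ∃ c : Finset (Fin N), c.Nonempty ∧
        v = 1 - ∑ i ∈ cand (g c), ρ (cluster i) (g (cand (g c))) * π i} := by
  -- Part 1
  have key : ∀ c : Finset (Fin N),
      1 - ∑ i ∈ cand (g c), ρ (cluster i) (g (cand (g c))) * π i
        ≤ 1 - ∑ i ∈ c, ρ (cluster i) (g c) * π i := by
    intro c
    rw [hcand c]
    apply sub_le_sub_left
    set D := cand (g c) with hD
    have hsum : ∀ s : Finset (Fin N),
        ∑ i ∈ s, ρ (cluster i) (g c) * π i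
          = ∑ j : Fin K, ∑ i ∈ s.filter (fun i => cluster i = j),
              ρ (cluster i) (g c) * π i := by
      intro s
      exact (Finset.sum_fiberwise s cluster (fun i => ρ (cluster i) (g c) * π i)).symm
    rw [hsum c, hsum D]
    apply Finset.sum_le_sum
    intro j _
    set A := c.filter (fun i => cluster i = j) with hA
    set B := D.filter (fun i => cluster i = j) with hB
    have hAsum : ∑ i ∈ A, ρ (cluster i) (g c) * π i = ρ j (g c) * ∑ i ∈ A, π i := by
      rw [Finset.mul_sum]
      apply Finset.sum_congr rfl
      intro i hi
      rw [(Finset.mem_filter.mp hi).2]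
    have hBsum : ∑ i ∈ B, ρ (cluster i) (g c) * π i = ρ j (g c) * ∑ i ∈ B, π i := by
      rw [Finset.mul_sum]
      apply Finset.sum_congr rfl
      intro i hi
      rw [(Finset.mem_filter.mp hi).2]
    rw [hAsum, hBsum]
    apply mul_le_mul_of_nonneg_left _ (hρ j (g c))
    -- card A = card B
    have hcards : A.card = B.card := by
      have h1 := hg c j
      have h2 := hg D j
      rw [hcand c] at h2
      rw [← hA] at h1
      rw [← hB] at h2
      omega
    have hdcard : (A \ B).card = (B \ A).card := by
      have h1 : (A ∩ B).card + (A \ B).card = A.card := Finset.card_inter_add_card_sdiff A B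
      have h2 : (B ∩ A).card + (B \ A).card = B.card := Finset.card_inter_add_card_sdiff B A
      rw [Finset.inter_comm] at h2
      omega
    have hexch : ∑ i ∈ A \ B, π i ≤ ∑ i ∈ B \ A, π i := by
      apply aux_sum_le_of_card_eq _ _ _ hdcard
      intro x hx y hy
      have hx' := Finset.mem_sdiff.mp hx
      have hy' := Finset.mem_sdiff.mp hy
      have hxA := Finset.mem_filter.mp hx'.1
      have hyB := Finset.mem_filter.mp hy'.1
      have hxnD : x ∉ D := by
        intro hxd
        exact hx'.2 (Finset.mem_filter.mpr ⟨hxd, hxA.2⟩)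
      exact htop (g c) y hyB.1 x hxnD (hxA.2.trans hyB.2.symm)
    calc ∑ i ∈ A, π i = ∑ i ∈ A ∩ B, π i + ∑ i ∈ A \ B, π i :=
          (Finset.sum_inter_add_sum_sdiff A B π).symm
      _ ≤ ∑ i ∈ A ∩ B, π i + ∑ i ∈ B \ A, π i := by linarith
      _ = ∑ i ∈ B ∩ A, π i + ∑ i ∈ B \ A, π i := by rw [Finset.inter_comm]
      _ = ∑ i ∈ B, π i := Finset.sum_inter_add_sum_sdiff B A π
  refine ⟨key, ?_⟩
  set f : Finset (Fin N) → ℝ := fun c => 1 - ∑ i ∈ c, ρ (cluster i) (g c) * π i with hf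
  set F : Finset (Fin N) → ℝ := fun c =>
    1 - ∑ i ∈ cand (g c), ρ (cluster i) (g (cand (g c))) * π i with hFdef
  have hFf : ∀ c : Finset (Fin N), F c = f (cand (g c)) := by
    intro c; rfl
  have hcandne : ∀ c : Finset (Fin N), c.Nonempty → (cand (g c)).Nonempty := by
    intro c ⟨i, hi⟩
    by_contra hne
    rw [Finset.not_nonempty_iff_eq_empty] at hne
    have h1 := hg c (cluster i)
    have h2 := hg (cand (g c)) (cluster i)
    rw [hcand c, hne] at h2
    simp at h2
    have : i ∈ c.filter (fun x => cluster x = cluster i) :=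
      Finset.mem_filter.mpr ⟨hi, rfl⟩
    have := Finset.card_pos.mpr ⟨i, this⟩
    omega
  set S := {v | ∃ c : Finset (Fin N), c.Nonempty ∧ v = f c} with hS
  set T := {v | ∃ c : Finset (Fin N), c.Nonempty ∧ v = F c} with hT
  have hTS : T ⊆ S := by
    rintro v ⟨c, hc, rfl⟩
    exact ⟨cand (g c), hcandne c hc, hFf c⟩
  have hSfin : S.Finite := by
    apply Set.Finite.subset (Set.finite_range f)
    rintro v ⟨c, _, rfl⟩
    exact ⟨c, rfl⟩
  rcases Set.eq_empty_or_nonempty S with hSe | hSne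
  · have hTe : T = ∅ := Set.eq_empty_of_subset_empty (hSe ▸ hTS)
    rw [hSe, hTe]
  · obtain ⟨v0, c0, hc0, rfl⟩ := hSne
    have hTne : T.Nonempty := ⟨F c0, c0, hc0, rfl⟩
    have hSne' : S.Nonempty := ⟨f c0, c0, hc0, rfl⟩
    apply le_antisymm
    · exact csInf_le_csInf hSfin.bddBelow hTne hTS
    · apply le_csInf hSne'
      rintro v ⟨c, hc, rfl⟩
      have h1 : sInf T ≤ F c := csInf_le (hSfin.subset hTS).bddBelow ⟨c, hc, rfl⟩
      exact h1.trans (key c)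
end

section
/- If for every profile g the group c(g) consisting of the links with largest demands in each cluster (with the required cardinalities) satisfies the dual constraint ∑_{j} r^j_g ∑_{i∈c(g)_j} π_i ≤ 1, and π is coordinatewise descending within each cluster (matching the descending order of demands), then π satisfies the dual constraint for all 2^N − 1 groups. Hence the dual LP is equivalent to an LP with at most N − 1 + ∏_{j=1}^K (n_j+1) constraints. -/
/-- If π is coordinatewise descending within each cluster (matching
the descending order of demands) and the dual constraint holds for every group made
of the first (lowest-index) links of each cluster, then the dual constraint holds
for all groups. -/
theorem stmt_17 (N K : ℕ) (cluster : Fin N → Fin K)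
    (d : Fin N → ℝ)
    (hd : ∀ i l : Fin N, cluster i = cluster l → i ≤ l → d l ≤ d i)
    (π : Fin N → ℝ) (hπ : ∀ i, 0 ≤ π i)
    (hdesc : ∀ i l : Fin N, cluster i = cluster l → i ≤ l → π l ≤ π i)
    (ρ : Fin K → (Fin K → ℕ) → ℝ) (hρ : ∀ j v, 0 ≤ ρ j v)
    (g : Finset (Fin N) → Fin K → ℕ)
    (hg : ∀ c j, g c j = (c.filter (fun i => cluster i = j)).card)
    (htop : ∀ cmax : Finset (Fin N), cmax.Nonempty →
      (∀ i ∈ cmax, ∀ l, l ∉ cmax → cluster l = cluster i → i ≤ l) →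
      ∑ i ∈ cmax, ρ (cluster i) (g cmax) * π i ≤ 1) :
    ∀ c : Finset (Fin N), c.Nonempty → ∑ i ∈ c, ρ (cluster i) (g c) * π i ≤ 1 := by
  have main : ∀ n : ℕ, ∀ c : Finset (Fin N), (∑ i ∈ c, (i : ℕ)) = n → c.Nonempty →
      ∑ i ∈ c, ρ (cluster i) (g c) * π i ≤ 1 := by
    intro n
    induction n using Nat.strong_induction_on with
    | _ n ih =>
      intro c hn hne
      by_cases htopc : ∀ i ∈ c, ∀ l, l ∉ c → cluster l = cluster i → i ≤ l
      · exact htop c hne htopc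
      · push_neg at htopc
        obtain ⟨i, hi, l, hl, hcl, hli⟩ := htopc
        have hli' : l < i := hli
        have hlne : l ≠ i := ne_of_lt hli'
        have hlerase : l ∉ c.erase i := fun h => hl (Finset.mem_of_mem_erase h)
        set c' : Finset (Fin N) := insert l (c.erase i) with hc'
        -- the cardinality profile is unchanged
        have hgeq : g c' = g c := by
          funext j
          rw [hg, hg, hc']
          rw [Finset.filter_insert]
          by_cases hj : cluster l = j
          · rw [if_pos hj, Finset.filter_erase,
              Finset.card_insert_of_notMem
                (fun h => hl (Finset.mem_of_mem_filter l (Finset.mem_of_mem_erase h))),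
              Finset.card_erase_of_mem (Finset.mem_filter.2 ⟨hi, hcl ▸ hj⟩)]
            have hpos : 0 < (c.filter (fun i => cluster i = j)).card :=
              Finset.card_pos.2 ⟨i, Finset.mem_filter.2 ⟨hi, hcl ▸ hj⟩⟩
            omega
          · rw [if_neg hj, Finset.filter_erase]
            have hnotin : i ∉ Finset.filter (fun x => cluster x = j) c :=
              fun h => hj (hcl.trans (Finset.mem_filter.1 h).2)
            rw [Finset.erase_eq_of_notMem hnotin]
        -- measure strictly decreases
        have hmeas : (∑ x ∈ c', (x : ℕ)) < n := by
          rw [hc', Finset.sum_insert hlerase, ← hn,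
            ← Finset.sum_erase_add c _ hi]
          omega
        have hne' : c'.Nonempty := ⟨l, Finset.mem_insert_self _ _⟩
        have key := ih _ hmeas c' rfl hne'
        -- compare the two sums
        have hsum : ∑ x ∈ c, ρ (cluster x) (g c) * π x
            ≤ ∑ x ∈ c', ρ (cluster x) (g c') * π x := by
          rw [hc', Finset.sum_insert hlerase, hgeq,
            ← Finset.sum_erase_add c (fun x => ρ (cluster x) (g c) * π x) hi,
            add_comm]
          refine add_le_add_left ?_ _
          rw [hcl]
          exact mul_le_mul_of_nonneg_left (hdesc l i hcl (le_of_lt hli')) (hρ _ _)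
        exact le_trans hsum key
  exact fun c hne => main _ c rfl hne
end
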